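/- Let d ≥ 2, ω = exp(2πi/d), and let (e_i)_{i=0}^{d−1} be the standard basis of ℂ^d. Define the unit vector ψ₀₀ = (1/√(2√d(1+√d))) ( (√d + 1) e₀ + Σ_{i=1}^{d−1} e_i ), the cyclic shift X with X e_i = e_{i+1 mod d}, the diagonal matrix Z with Z e_i = ω^i e_i, the states ψ_{y₀y₁} = X^{y₀} Z^{y₁} ψ₀₀ for y₀, y₁ ∈ {0,…,d−1}, and the Fourier basis vectors f_j = (1/√d) Σ_{k=0}^{d−1} ω^{jk} e_k. Then Σ_{y₀=0}^{d−1} Σ_{y₁=0}^{d−1} ( |⟨e_{y₀}, ψ_{y₀y₁}⟩|² + |⟨f_{y₁}, ψ_{y₀y₁}⟩|² ) = d² + d√d. In particular this quantum value of the coherence witness W_{C,d} exceeds the incoherent bound d² + d. -/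

import Mathlib

open Matrix Complex

/-- The inner product `⟨ψ, φ⟩ = ∑ i, conj (ψ i) * φ i` on `ℂ^d`. -/
noncomputable def qinner {d : ℕ} (ψ φ : Fin d → ℂ) : ℂ :=
  ∑ i, (starRingEnd ℂ) (ψ i) * φ i

/- ### Auxiliary definitions and lemmas -/

noncomputable def w (d : ℕ) : ℂ := Complex.exp (2 * Real.pi * Complex.I / d)

noncomputable def psi00 (d : ℕ) : Fin d → ℂ :=
  fun i => if (i : ℕ) = 0 then
    (((Real.sqrt d + 1) * (Real.sqrt (2 * Real.sqrt d * (1 + Real.sqrt d)))⁻¹ : ℝ) : ℂ)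
  else (((Real.sqrt (2 * Real.sqrt d * (1 + Real.sqrt d)))⁻¹ : ℝ) : ℂ)

lemma qinner_single {d : ℕ} (j : Fin d) (v : Fin d → ℂ) :
    qinner (Pi.single j 1) v = v j := by
  simp [qinner, Pi.single_apply, apply_ite]

lemma X_mulVec {d : ℕ} [NeZero d] (hd : 2 ≤ d) (v : Fin d → ℂ) (i : Fin d) :
    (Matrix.of fun i j : Fin d => if (i : ℕ) = ((j : ℕ) + 1) % d then (1:ℂ) else 0).mulVec v i
      = v (i - 1) := by
  have key : ∀ j : Fin d, ((i : ℕ) = ((j : ℕ) + 1) % d) ↔ j = i - 1 := by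
    intro j
    have h1 : ((i : ℕ) = ((j : ℕ) + 1) % d) ↔ i = j + 1 := by
      rw [Fin.ext_iff, Fin.add_def, Fin.val_one']
      rw [Nat.mod_eq_of_lt (by omega : 1 < d)]
    rw [h1, eq_sub_iff_add_eq]; exact eq_comm
  simp only [Matrix.mulVec, dotProduct, Matrix.of_apply, key, ite_mul, one_mul, zero_mul]
  simp

open Fin.NatCast in
lemma Xpow_mulVec {d : ℕ} [NeZero d] (hd : 2 ≤ d) (a : ℕ) (v : Fin d → ℂ) (i : Fin d) :
    ((Matrix.of fun i j : Fin d => if (i : ℕ) = ((j : ℕ) + 1) % d then (1:ℂ) else 0) ^ a).mulVec v i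
      = v (i - a) := by
  induction a generalizing i with
  | zero => simp
  | succ n ih =>
      rw [pow_succ', ← Matrix.mulVec_mulVec, X_mulVec hd, ih]
      congr 1
      push_cast
      abel

lemma w_pow_d {d : ℕ} (hd : 2 ≤ d) : w d ^ d = 1 := by
  rw [w, ← Complex.exp_nat_mul]
  have hd0 : (d : ℂ) ≠ 0 := Nat.cast_ne_zero.2 (by omega)
  have h : (d : ℂ) * (2 * Real.pi * Complex.I / d) = 2 * Real.pi * Complex.I := by
    field_simp
  rw [h, Complex.exp_two_pi_mul_I]

lemma w_pow_mod {d : ℕ} (hd : 2 ≤ d) (n : ℕ) : w d ^ n = w d ^ (n % d) := by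
  conv_lhs => rw [← Nat.div_add_mod n d]
  rw [pow_add, pow_mul, w_pow_d hd, one_pow, one_mul]

lemma normSq_w (d : ℕ) : Complex.normSq (w d) = 1 := by
  rw [w, Complex.normSq_eq_norm_sq, Complex.norm_exp]
  have h : (2 * Real.pi * Complex.I / d).re = 0 := by
    have h2 : (2 * Real.pi * Complex.I / d) = ((2 * Real.pi / d : ℝ) : ℂ) * Complex.I := by
      push_cast; ring
    rw [h2]; simp
  rw [h, Real.exp_zero, one_pow]

lemma conj_w_mul (d : ℕ) (n : ℕ) : (starRingEnd ℂ) (w d ^ n) * w d ^ n = 1 := by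
  rw [← Complex.normSq_eq_conj_mul_self, map_pow, normSq_w, one_pow, Complex.ofReal_one]

lemma norm_w_pow (d n : ℕ) : ‖w d ^ n‖ = 1 := by
  have h := normSq_w d
  rw [Complex.normSq_eq_norm_sq] at h
  have habs : ‖w d‖ = 1 := by nlinarith [norm_nonneg (w d)]
  rw [norm_pow, habs, one_pow]

open Fin.NatCast in
lemma psi_apply {d : ℕ} [NeZero d] (hd : 2 ≤ d) (y₀ y₁ : Fin d) (i : Fin d) :
    (((Matrix.of fun i j : Fin d => if (i : ℕ) = ((j : ℕ) + 1) % d then (1:ℂ) else 0) ^ (y₀:ℕ) *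
      (Matrix.diagonal fun i : Fin d => w d ^ (i:ℕ)) ^ (y₁:ℕ)).mulVec (psi00 d)) i
      = (w d ^ ((i - y₀ : Fin d) : ℕ)) ^ (y₁:ℕ) * psi00 d (i - y₀) := by
  rw [← Matrix.mulVec_mulVec, Xpow_mulVec hd]
  rw [Matrix.diagonal_pow, Matrix.mulVec_diagonal]
  simp [Pi.pow_apply]

lemma sum_psi00 {d : ℕ} [NeZero d] (hd : 2 ≤ d) :
    ∑ j : Fin d, psi00 d j
      = (((Real.sqrt d + d) * (Real.sqrt (2 * Real.sqrt d * (1 + Real.sqrt d)))⁻¹ : ℝ) : ℂ) := by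
  set c : ℝ := (Real.sqrt (2 * Real.sqrt d * (1 + Real.sqrt d)))⁻¹ with hc
  have h : ∀ j : Fin d, psi00 d j
      = ((c : ℝ) : ℂ) + (if j = (0 : Fin d) then (((Real.sqrt d) * c : ℝ) : ℂ) else 0) := by
    intro j
    have hz : ((j : ℕ) = 0) ↔ j = 0 := by rw [Fin.ext_iff, Fin.val_zero]
    rw [psi00]
    simp only [hz]
    split_ifs with h
    · push_cast [hc]; ring
    · push_cast [hc]; ring
  rw [Finset.sum_congr rfl (fun j _ => h j)]
  rw [Finset.sum_add_distrib, Finset.sum_const, Finset.sum_ite_eq']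
  simp only [Finset.mem_univ, if_true, Finset.card_univ, Fintype.card_fin, nsmul_eq_mul]
  push_cast
  ring

lemma inner_e {d : ℕ} [NeZero d] (hd : 2 ≤ d) (y₀ y₁ : Fin d) :
    qinner (Pi.single y₀ 1)
      (((Matrix.of fun i j : Fin d => if (i : ℕ) = ((j : ℕ) + 1) % d then (1:ℂ) else 0) ^ (y₀:ℕ) *
        (Matrix.diagonal fun i : Fin d => w d ^ (i:ℕ)) ^ (y₁:ℕ)).mulVec (psi00 d))
      = (((Real.sqrt d + 1) * (Real.sqrt (2 * Real.sqrt d * (1 + Real.sqrt d)))⁻¹ : ℝ) : ℂ) := by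
  rw [qinner_single, psi_apply hd, sub_self]
  rw [show ((0 : Fin d) : ℕ) = 0 from Fin.val_zero d]
  rw [pow_zero, one_pow, one_mul, psi00]
  simp

lemma inner_f {d : ℕ} [NeZero d] (hd : 2 ≤ d) (y₀ y₁ : Fin d) :
    qinner (fun k => (((Real.sqrt d)⁻¹ : ℝ) : ℂ) * w d ^ ((y₁:ℕ) * (k:ℕ)))
      (((Matrix.of fun i j : Fin d => if (i : ℕ) = ((j : ℕ) + 1) % d then (1:ℂ) else 0) ^ (y₀:ℕ) *
        (Matrix.diagonal fun i : Fin d => w d ^ (i:ℕ)) ^ (y₁:ℕ)).mulVec (psi00 d))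
      = (((Real.sqrt d)⁻¹ : ℝ) : ℂ) * (starRingEnd ℂ) (w d ^ ((y₁:ℕ) * (y₀:ℕ))) *
        (((Real.sqrt d + d) * (Real.sqrt (2 * Real.sqrt d * (1 + Real.sqrt d)))⁻¹ : ℝ) : ℂ) := by
  rw [qinner]
  have hst : ∀ k : Fin d,
      (starRingEnd ℂ) ((((Real.sqrt d)⁻¹ : ℝ) : ℂ) * w d ^ ((y₁:ℕ) * (k:ℕ))) *
        (((Matrix.of fun i j : Fin d => if (i : ℕ) = ((j : ℕ) + 1) % d then (1:ℂ) else 0) ^ (y₀:ℕ) *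
        (Matrix.diagonal fun i : Fin d => w d ^ (i:ℕ)) ^ (y₁:ℕ)).mulVec (psi00 d)) k
      = (starRingEnd ℂ) ((((Real.sqrt d)⁻¹ : ℝ) : ℂ) * w d ^ ((y₁:ℕ) * (k:ℕ))) *
        ((w d ^ ((k - y₀ : Fin d) : ℕ)) ^ (y₁:ℕ) * psi00 d (k - y₀)) := by
    intro k; rw [psi_apply hd]
  rw [Finset.sum_congr rfl (fun k _ => hst k)]
  rw [← Fintype.sum_equiv (Equiv.addRight y₀)
      (fun j => (starRingEnd ℂ) ((((Real.sqrt d)⁻¹ : ℝ) : ℂ) * w d ^ ((y₁:ℕ) * (((j + y₀ : Fin d)):ℕ))) *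
        ((w d ^ ((j : Fin d) : ℕ)) ^ (y₁:ℕ) * psi00 d j))
      _ (fun j => by simp [Equiv.coe_addRight, add_sub_cancel_right])]
  have hterm : ∀ j : Fin d,
      (starRingEnd ℂ) ((((Real.sqrt d)⁻¹ : ℝ) : ℂ) * w d ^ ((y₁:ℕ) * (((j + y₀ : Fin d)):ℕ))) *
        ((w d ^ ((j : Fin d) : ℕ)) ^ (y₁:ℕ) * psi00 d j)
      = (((Real.sqrt d)⁻¹ : ℝ) : ℂ) * (starRingEnd ℂ) (w d ^ ((y₁:ℕ) * (y₀:ℕ))) * psi00 d j := by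
    intro j
    have e0 : ((j + y₀ : Fin d) : ℕ) = ((j:ℕ) + (y₀:ℕ)) % d := Fin.val_add j y₀
    have e1 : w d ^ ((y₁:ℕ) * (((j:ℕ) + (y₀:ℕ)) % d))
        = w d ^ ((y₁:ℕ) * (j:ℕ)) * w d ^ ((y₁:ℕ) * (y₀:ℕ)) := by
      calc w d ^ ((y₁:ℕ) * (((j:ℕ) + (y₀:ℕ)) % d))
          = w d ^ (((y₁:ℕ) * (((j:ℕ) + (y₀:ℕ)) % d)) % d) := w_pow_mod hd _
        _ = w d ^ (((y₁:ℕ) * ((j:ℕ) + (y₀:ℕ))) % d) := by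
              exact congrArg _ ((Nat.mod_modEq _ d).mul_left _)
        _ = w d ^ ((y₁:ℕ) * ((j:ℕ) + (y₀:ℕ))) := (w_pow_mod hd _).symm
        _ = w d ^ ((y₁:ℕ) * (j:ℕ)) * w d ^ ((y₁:ℕ) * (y₀:ℕ)) := by
              rw [← pow_add, Nat.mul_add]
    have e2 : (w d ^ ((j : Fin d) : ℕ)) ^ (y₁:ℕ) = w d ^ ((y₁:ℕ) * (j:ℕ)) := by
      rw [← pow_mul, Nat.mul_comm]
    rw [e0, e1, e2, _root_.map_mul, _root_.map_mul, Complex.conj_ofReal]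
    have e3 : (starRingEnd ℂ) (w d ^ ((y₁:ℕ) * (j:ℕ))) * w d ^ ((y₁:ℕ) * (j:ℕ)) = 1 :=
      conj_w_mul d _
    calc (((Real.sqrt d)⁻¹ : ℝ) : ℂ) *
          ((starRingEnd ℂ) (w d ^ ((y₁:ℕ) * (j:ℕ))) * (starRingEnd ℂ) (w d ^ ((y₁:ℕ) * (y₀:ℕ)))) *
          (w d ^ ((y₁:ℕ) * (j:ℕ)) * psi00 d j)
        = (((Real.sqrt d)⁻¹ : ℝ) : ℂ) * (starRingEnd ℂ) (w d ^ ((y₁:ℕ) * (y₀:ℕ))) *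
            (((starRingEnd ℂ) (w d ^ ((y₁:ℕ) * (j:ℕ))) * w d ^ ((y₁:ℕ) * (j:ℕ))) * psi00 d j) := by
            ring
      _ = (((Real.sqrt d)⁻¹ : ℝ) : ℂ) * (starRingEnd ℂ) (w d ^ ((y₁:ℕ) * (y₀:ℕ))) * psi00 d j := by
            rw [e3, one_mul]
  rw [Finset.sum_congr rfl (fun j _ => hterm j), ← Finset.mul_sum, sum_psi00 hd]

lemma final_alg (d : ℕ) (hd : 2 ≤ d) :
    (d : ℝ) * ((d : ℝ) *
      (((Real.sqrt d + 1) * (Real.sqrt (2 * Real.sqrt d * (1 + Real.sqrt d)))⁻¹)^2 +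
       ((Real.sqrt d)⁻¹)^2 *
         ((Real.sqrt d + d) * (Real.sqrt (2 * Real.sqrt d * (1 + Real.sqrt d)))⁻¹)^2))
      = (d : ℝ)^2 + d * Real.sqrt d := by
  have hd0 : (0:ℝ) < d := by positivity
  set s : ℝ := Real.sqrt d with hsdef
  have hs0 : 0 < s := Real.sqrt_pos.2 hd0
  have hs : s ^ 2 = d := Real.sq_sqrt (le_of_lt hd0)
  have h1s : (0:ℝ) < 1 + s := by linarith
  have hc2 : ((Real.sqrt (2 * s * (1 + s)))⁻¹) ^ 2 = (2 * s * (1 + s))⁻¹ := by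
    rw [inv_pow, Real.sq_sqrt (by positivity)]
  rw [← hs]
  rw [mul_pow, mul_pow, hc2]
  field_simp
  ring

lemma gt_bound (d : ℕ) (hd : 2 ≤ d) :
    (d : ℝ) ^ 2 + d * Real.sqrt d > (d : ℝ) ^ 2 + d := by
  have hd0 : (0:ℝ) < d := by positivity
  have h1 : (1:ℝ) < Real.sqrt d := by
    have hdr : (1:ℝ) < d := by exact_mod_cast (show 1 < d by omega)
    rw [show (1:ℝ) = Real.sqrt 1 from Real.sqrt_one.symm]
    exact Real.sqrt_lt_sqrt (by norm_num) hdr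
  nlinarith

lemma main_sum (d : ℕ) (hd : 2 ≤ d) :
    (∑ y₀ : Fin d, ∑ y₁ : Fin d,
        (‖qinner (Pi.single y₀ 1)
            (((Matrix.of fun i j : Fin d => if (i : ℕ) = ((j : ℕ) + 1) % d then (1:ℂ) else 0) ^ (y₀:ℕ) *
              (Matrix.diagonal fun i : Fin d => w d ^ (i:ℕ)) ^ (y₁:ℕ)).mulVec (psi00 d))‖ ^ 2 +
         ‖qinner (fun k => (((Real.sqrt d)⁻¹ : ℝ) : ℂ) * w d ^ ((y₁:ℕ) * (k:ℕ)))
            (((Matrix.of fun i j : Fin d => if (i : ℕ) = ((j : ℕ) + 1) % d then (1:ℂ) else 0) ^ (y₀:ℕ) *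
              (Matrix.diagonal fun i : Fin d => w d ^ (i:ℕ)) ^ (y₁:ℕ)).mulVec (psi00 d))‖ ^ 2))
      = (d : ℝ) ^ 2 + d * Real.sqrt d := by
  haveI : NeZero d := ⟨by omega⟩
  have hpt : ∀ y₀ y₁ : Fin d,
      (‖qinner (Pi.single y₀ 1)
            (((Matrix.of fun i j : Fin d => if (i : ℕ) = ((j : ℕ) + 1) % d then (1:ℂ) else 0) ^ (y₀:ℕ) *
              (Matrix.diagonal fun i : Fin d => w d ^ (i:ℕ)) ^ (y₁:ℕ)).mulVec (psi00 d))‖ ^ 2 +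
         ‖qinner (fun k => (((Real.sqrt d)⁻¹ : ℝ) : ℂ) * w d ^ ((y₁:ℕ) * (k:ℕ)))
            (((Matrix.of fun i j : Fin d => if (i : ℕ) = ((j : ℕ) + 1) % d then (1:ℂ) else 0) ^ (y₀:ℕ) *
              (Matrix.diagonal fun i : Fin d => w d ^ (i:ℕ)) ^ (y₁:ℕ)).mulVec (psi00 d))‖ ^ 2)
      = ((Real.sqrt d + 1) * (Real.sqrt (2 * Real.sqrt d * (1 + Real.sqrt d)))⁻¹)^2 +
        ((Real.sqrt d)⁻¹)^2 *
          ((Real.sqrt d + d) * (Real.sqrt (2 * Real.sqrt d * (1 + Real.sqrt d)))⁻¹)^2 := by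
    intro y₀ y₁
    rw [inner_e hd, inner_f hd]
    rw [norm_mul, norm_mul, Complex.norm_real, Complex.norm_real, Complex.norm_real,
        RCLike.norm_conj, norm_w_pow]
    rw [mul_one, mul_pow, Real.norm_eq_abs, Real.norm_eq_abs, Real.norm_eq_abs,
        _root_.sq_abs, _root_.sq_abs, _root_.sq_abs]
  rw [Finset.sum_congr rfl (fun y₀ _ => Finset.sum_congr rfl (fun y₁ _ => hpt y₀ y₁))]
  rw [Finset.sum_const, Finset.sum_const, Finset.card_univ, Fintype.card_fin,
      nsmul_eq_mul, nsmul_eq_mul]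
  exact final_alg d hd

theorem stmt_10 (d : ℕ) (hd : 2 ≤ d) :
    let ω : ℂ := Complex.exp (2 * Real.pi * Complex.I / d)
    let c : ℝ := (Real.sqrt (2 * Real.sqrt d * (1 + Real.sqrt d)))⁻¹
    let ψ₀₀ : Fin d → ℂ :=
      fun i => if (i : ℕ) = 0 then (((Real.sqrt d + 1) * c : ℝ) : ℂ) else ((c : ℝ) : ℂ)
    let X : Matrix (Fin d) (Fin d) ℂ :=
      Matrix.of fun i j => if (i : ℕ) = ((j : ℕ) + 1) % d then 1 else 0
    let Z : Matrix (Fin d) (Fin d) ℂ := Matrix.diagonal fun i => ω ^ (i : ℕ)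
    let ψ : Fin d → Fin d → Fin d → ℂ :=
      fun y₀ y₁ => (X ^ (y₀ : ℕ) * Z ^ (y₁ : ℕ)).mulVec ψ₀₀
    let e : Fin d → Fin d → ℂ := fun j => Pi.single j 1
    let f : Fin d → Fin d → ℂ :=
      fun j k => ((Real.sqrt d)⁻¹ : ℝ) * ω ^ ((j : ℕ) * (k : ℕ))
    (∑ y₀ : Fin d, ∑ y₁ : Fin d,
        (‖qinner (e y₀) (ψ y₀ y₁)‖ ^ 2 + ‖qinner (f y₁) (ψ y₀ y₁)‖ ^ 2)
      = (d : ℝ) ^ 2 + d * Real.sqrt d) ∧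
      (d : ℝ) ^ 2 + d * Real.sqrt d > (d : ℝ) ^ 2 + d := by
  exact ⟨main_sum d hd, gt_bound d hd⟩
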